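/- For all integers d ≥ 1 and ℓ ≥ 1, the formal power series B_{d,ℓ}(z) := Σ_{n ≥ 1} b_{d,ℓ}(n) z^n over ℚ satisfies B_{d,ℓ} = z^ℓ + z^ℓ·B_{d,ℓ} + d·z²·B_{d,ℓ} + d·z²·B_{d,ℓ}²; equivalently, d·z²·B_{d,ℓ}² − (1 − z^ℓ − d·z²)·B_{d,ℓ} + z^ℓ = 0. -/

import Mathlib

namespace MultiOp

mutual
inductive Atom (d : ℕ) : Type where
  | star : Atom d
  | op : Fin d → Mon d → Atom d
inductive Mon (d : ℕ) : Type where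
  | single : Atom d → Mon d
  | cons : Atom d → Mon d → Mon d
end

mutual
def Atom.deg {d : ℕ} : Atom d → ℕ
  | .star => 1
  | .op _ v => v.deg
def Mon.deg {d : ℕ} : Mon d → ℕ
  | .single a => a.deg
  | .cons a v => a.deg + v.deg
end

mutual
def Atom.mult {d : ℕ} : Atom d → Fin d → ℕ
  | .star, _ => 0
  | .op i v, j => (if i = j then 1 else 0) + v.mult j
def Mon.mult {d : ℕ} : Mon d → Fin d → ℕ
  | .single a, j => a.mult j
  | .cons a v, j => a.mult j + v.mult j
end

noncomputable def a (d r : ℕ) (s : Fin d → ℕ) : ℕ :=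
  Nat.card {v : Mon d // v.deg = r ∧ v.mult = s}

noncomputable def b (d ℓ n : ℕ) : ℕ :=
  Nat.card {v : Mon d // ℓ * v.deg + 2 * (∑ i, v.mult i) = n}

noncomputable def A (d : ℕ) : MvPowerSeries (Option (Fin d)) ℚ :=
  fun e => (a d (e none) (fun i => e (some i)) : ℚ)

noncomputable def B (d ℓ : ℕ) : PowerSeries ℚ :=
  PowerSeries.mk fun n => (b d ℓ n : ℚ)

def narayana (n k : ℕ) : ℚ := (n.choose k * n.choose (k + 1) : ℚ) / n


-- weights
def Atom.w {d : ℕ} (ℓ : ℕ) (a : Atom d) : ℕ := ℓ * a.deg + 2 * ∑ i, a.mult i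
def Mon.w {d : ℕ} (ℓ : ℕ) (v : Mon d) : ℕ := ℓ * v.deg + 2 * ∑ i, v.mult i

variable {d ℓ : ℕ}

lemma w_star : (Atom.star : Atom d).w ℓ = ℓ := by
  simp [Atom.w, Atom.deg, Atom.mult]

lemma w_op (i : Fin d) (u : Mon d) : (Atom.op i u).w ℓ = 2 + u.w ℓ := by
  simp only [Atom.w, Mon.w, Atom.deg, Atom.mult, Finset.sum_add_distrib]
  rw [Finset.sum_ite_eq Finset.univ i (fun _ => 1)]
  simp; ring

lemma w_single (a : Atom d) : (Mon.single a).w ℓ = a.w ℓ := rfl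

lemma w_cons (a : Atom d) (v : Mon d) : (Mon.cons a v).w ℓ = a.w ℓ + v.w ℓ := by
  simp only [Mon.w, Atom.w, Mon.deg, Mon.mult, Finset.sum_add_distrib]
  ring

mutual
lemma Atom.one_le_deg {d : ℕ} : ∀ a : Atom d, 1 ≤ a.deg
  | .star => le_refl 1
  | .op _ v => v.one_le_deg
lemma Mon.one_le_deg {d : ℕ} : ∀ v : Mon d, 1 ≤ v.deg
  | .single a => a.one_le_deg
  | .cons a v => le_trans a.one_le_deg (Nat.le_add_right _ _)
end

lemma le_w (hl : 1 ≤ ℓ) (v : Mon d) : ℓ ≤ v.w ℓ :=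
  le_trans (by simpa using Nat.mul_le_mul_left ℓ v.one_le_deg) (Nat.le_add_right _ _)

lemma one_le_w (hl : 1 ≤ ℓ) (v : Mon d) : 1 ≤ v.w ℓ := le_trans hl (le_w hl v)


/-- The main structural decomposition of monomials of weight `n`. -/
def monEquiv (d ℓ n : ℕ) :
    {v : Mon d // v.w ℓ = n} ≃
      ({_x : Unit // ℓ = n}
       ⊕ Fin d × {u : Mon d // 2 + u.w ℓ = n})
      ⊕ ({v : Mon d // ℓ + v.w ℓ = n}
       ⊕ Fin d × {q : Mon d × Mon d // 2 + (q.1.w ℓ + q.2.w ℓ) = n}) where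
  toFun := fun x => match x with
    | ⟨.single .star, h⟩ => .inl (.inl ⟨Unit.unit, by rwa [w_single, w_star] at h⟩)
    | ⟨.single (.op i u), h⟩ => .inl (.inr (i, ⟨u, by rwa [w_single, w_op] at h⟩))
    | ⟨.cons .star v, h⟩ => .inr (.inl ⟨v, by rwa [w_cons, w_star] at h⟩)
    | ⟨.cons (.op i u) v, h⟩ =>
        .inr (.inr (i, ⟨(u, v), by rw [w_cons, w_op, Nat.add_assoc] at h; exact h⟩))
  invFun := fun x => match x with
    | .inl (.inl ⟨_, h⟩) => ⟨.single .star, by rw [w_single, w_star]; exact h⟩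
    | .inl (.inr (i, ⟨u, h⟩)) => ⟨.single (.op i u), by rwa [w_single, w_op]⟩
    | .inr (.inl ⟨v, h⟩) => ⟨.cons .star v, by rwa [w_cons, w_star]⟩
    | .inr (.inr (i, ⟨(u, v), h⟩)) => ⟨.cons (.op i u) v, by rw [w_cons, w_op, Nat.add_assoc]; exact h⟩
  left_inv := by rintro ⟨(⟨⟩|⟨i,u⟩)|⟨(⟨⟩|⟨i,u⟩),v⟩, h⟩ <;> rfl
  right_inv := by rintro ((⟨⟨⟩,h⟩|⟨i,u,h⟩)|(⟨v,h⟩|⟨i,⟨u,v⟩,h⟩)) <;> rfl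

/-- Pairs of monomials with weights summing to `m`, decomposed over the antidiagonal. -/
def pairEquiv (d ℓ m : ℕ) :
    {q : Mon d × Mon d // q.1.w ℓ + q.2.w ℓ = m} ≃
      Σ p : (Finset.HasAntidiagonal.antidiagonal m : Finset (ℕ × ℕ)),
        {v : Mon d // v.w ℓ = (p : ℕ × ℕ).1} × {v : Mon d // v.w ℓ = (p : ℕ × ℕ).2} where
  toFun := fun q => ⟨⟨(q.1.1.w ℓ, q.1.2.w ℓ), by
      simpa [Finset.HasAntidiagonal.mem_antidiagonal] using q.2⟩, ⟨q.1.1, rfl⟩, ⟨q.1.2, rfl⟩⟩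
  invFun := fun x => ⟨(x.2.1.1, x.2.2.1), by
      have h := Finset.HasAntidiagonal.mem_antidiagonal.mp (x.1).2
      rw [x.2.1.2, x.2.2.2]; exact h⟩
  left_inv := by rintro ⟨⟨u, v⟩, h⟩; rfl
  right_inv := by
    rintro ⟨⟨⟨p1, p2⟩, hp⟩, ⟨u, hu⟩, ⟨v, hv⟩⟩
    dsimp at hu hv
    subst hu; subst hv; rfl

/-- Weight shift. -/
def shiftEquiv (d ℓ k n : ℕ) (hk : k ≤ n) :
    {u : Mon d // k + u.w ℓ = n} ≃ {u : Mon d // u.w ℓ = n - k} :=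
  Equiv.subtypeEquivRight (fun u => by omega)

lemma shift_empty (hl : 1 ≤ ℓ) {k n : ℕ} (hn : n ≤ k) :
    IsEmpty {u : Mon d // k + u.w ℓ = n} := by
  constructor; rintro ⟨u, hu⟩
  have := one_le_w hl u
  omega

lemma pair_empty {n : ℕ} (hn : n < 2) :
    IsEmpty {q : Mon d × Mon d // 2 + (q.1.w ℓ + q.2.w ℓ) = n} := by
  constructor; rintro ⟨q, hq⟩; omega

lemma finite_T (hl : 1 ≤ ℓ) : ∀ n : ℕ, Finite {v : Mon d // v.w ℓ = n} := by
  intro n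
  induction n using Nat.strong_induction_on with
  | _ n ih =>
    have hsh : ∀ k, 1 ≤ k → Finite {u : Mon d // k + u.w ℓ = n} := by
      intro k hk
      rcases le_or_gt n k with h | h
      · haveI := shift_empty (d := d) hl h; exact inferInstance
      · haveI := ih (n - k) (by omega)
        exact Finite.of_equiv _ (shiftEquiv d ℓ k n h.le).symm
    haveI h2 := hsh 2 (by norm_num)
    haveI hL := hsh ℓ hl
    haveI hP : Finite {q : Mon d × Mon d // 2 + (q.1.w ℓ + q.2.w ℓ) = n} := by
      rcases lt_or_ge n 2 with h | h
      · haveI := pair_empty (d := d) (ℓ := ℓ) h; exact inferInstance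
      · have e1 : {q : Mon d × Mon d // 2 + (q.1.w ℓ + q.2.w ℓ) = n} ≃
            {q : Mon d × Mon d // q.1.w ℓ + q.2.w ℓ = n - 2} :=
          Equiv.subtypeEquivRight (fun q => by omega)
        haveI : ∀ p : (Finset.HasAntidiagonal.antidiagonal (n - 2) : Finset (ℕ × ℕ)),
            Finite ({v : Mon d // v.w ℓ = (p : ℕ × ℕ).1} ×
              {v : Mon d // v.w ℓ = (p : ℕ × ℕ).2}) := by
          intro p
          have hp := Finset.HasAntidiagonal.mem_antidiagonal.mp p.2
          haveI := ih (p : ℕ × ℕ).1 (by omega)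
          haveI := ih (p : ℕ × ℕ).2 (by omega)
          infer_instance
        exact Finite.of_equiv _ ((e1.trans (pairEquiv d ℓ (n - 2))).symm)
    exact Finite.of_equiv _ (monEquiv d ℓ n).symm

lemma card_sigma' {ι : Type*} [Fintype ι] (f : ι → Type*) [∀ i, Finite (f i)] :
    Nat.card (Σ i, f i) = ∑ i, Nat.card (f i) := by
  haveI := fun i => Fintype.ofFinite (f i)
  simp [Nat.card_eq_fintype_card, Fintype.card_sigma]

lemma b_eq (n : ℕ) : b d ℓ n = Nat.card {v : Mon d // v.w ℓ = n} := rfl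

lemma card_unit (ℓ n : ℕ) : Nat.card {_x : Unit // ℓ = n} = if ℓ = n then 1 else 0 := by
  split
  · next h => subst h; simp [Nat.card_eq_fintype_card]
  · next h => haveI : IsEmpty {_x : Unit // ℓ = n} := ⟨fun x => h x.2⟩; simp

lemma card_shift (hl : 1 ≤ ℓ) (k n : ℕ) (hk : 1 ≤ k) :
    Nat.card {u : Mon d // k + u.w ℓ = n} = if k ≤ n then b d ℓ (n - k) else 0 := by
  split
  · next h => rw [Nat.card_congr (shiftEquiv d ℓ k n h)]; rfl
  · next h =>
    haveI := shift_empty (d := d) hl (show n ≤ k by omega)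
    simp

lemma card_pair (hl : 1 ≤ ℓ) (n : ℕ) :
    Nat.card {q : Mon d × Mon d // 2 + (q.1.w ℓ + q.2.w ℓ) = n} =
      if 2 ≤ n then ∑ p ∈ Finset.HasAntidiagonal.antidiagonal (n - 2), b d ℓ p.1 * b d ℓ p.2 else 0 := by
  split
  · next h =>
    have e1 : {q : Mon d × Mon d // 2 + (q.1.w ℓ + q.2.w ℓ) = n} ≃
        {q : Mon d × Mon d // q.1.w ℓ + q.2.w ℓ = n - 2} :=
      Equiv.subtypeEquivRight (fun q => by omega)
    rw [Nat.card_congr (e1.trans (pairEquiv d ℓ (n - 2)))]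
    haveI : ∀ p : (Finset.HasAntidiagonal.antidiagonal (n - 2) : Finset (ℕ × ℕ)),
        Finite ({v : Mon d // v.w ℓ = (p : ℕ × ℕ).1} ×
          {v : Mon d // v.w ℓ = (p : ℕ × ℕ).2}) := by
      intro p
      haveI := finite_T (d := d) hl (p : ℕ × ℕ).1
      haveI := finite_T (d := d) hl (p : ℕ × ℕ).2
      infer_instance
    rw [card_sigma']
    rw [← Finset.sum_coe_sort (Finset.HasAntidiagonal.antidiagonal (n - 2))
      (fun p => b d ℓ p.1 * b d ℓ p.2)]
    exact Finset.sum_congr rfl fun p _ => by rw [Nat.card_prod]; rfl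
  · next h =>
    haveI := pair_empty (d := d) (ℓ := ℓ) (show n < 2 by omega)
    simp

lemma card_rec (hl : 1 ≤ ℓ) (n : ℕ) :
    b d ℓ n = ((if ℓ = n then 1 else 0) + d * (if 2 ≤ n then b d ℓ (n - 2) else 0))
      + ((if ℓ ≤ n then b d ℓ (n - ℓ) else 0)
        + d * (if 2 ≤ n then ∑ p ∈ Finset.HasAntidiagonal.antidiagonal (n - 2),
            b d ℓ p.1 * b d ℓ p.2 else 0)) := by
  haveI h2 : Finite {u : Mon d // 2 + u.w ℓ = n} := by
    rcases le_or_gt n 2 with h | h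
    · haveI := shift_empty (d := d) hl h; exact inferInstance
    · haveI := finite_T (d := d) hl (n - 2)
      exact Finite.of_equiv _ (shiftEquiv d ℓ 2 n h.le).symm
  haveI hL : Finite {u : Mon d // ℓ + u.w ℓ = n} := by
    rcases le_or_gt n ℓ with h | h
    · haveI := shift_empty (d := d) hl h; exact inferInstance
    · haveI := finite_T (d := d) hl (n - ℓ)
      exact Finite.of_equiv _ (shiftEquiv d ℓ ℓ n h.le).symm
  haveI hP : Finite {q : Mon d × Mon d // 2 + (q.1.w ℓ + q.2.w ℓ) = n} := by
    rcases lt_or_ge n 2 with h | h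
    · haveI := pair_empty (d := d) (ℓ := ℓ) h; exact inferInstance
    · have e1 : {q : Mon d × Mon d // 2 + (q.1.w ℓ + q.2.w ℓ) = n} ≃
          {q : Mon d × Mon d // q.1.w ℓ + q.2.w ℓ = n - 2} :=
        Equiv.subtypeEquivRight (fun q => by omega)
      haveI : ∀ p : (Finset.HasAntidiagonal.antidiagonal (n - 2) : Finset (ℕ × ℕ)),
          Finite ({v : Mon d // v.w ℓ = (p : ℕ × ℕ).1} ×
            {v : Mon d // v.w ℓ = (p : ℕ × ℕ).2}) := by
        intro p
        haveI := finite_T (d := d) hl (p : ℕ × ℕ).1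
        haveI := finite_T (d := d) hl (p : ℕ × ℕ).2
        infer_instance
      exact Finite.of_equiv _ ((e1.trans (pairEquiv d ℓ (n - 2))).symm)
  rw [b_eq, Nat.card_congr (monEquiv d ℓ n), Nat.card_sum, Nat.card_sum, Nat.card_sum,
    Nat.card_prod, Nat.card_prod, card_unit, card_shift hl 2 n (by norm_num),
    card_shift hl ℓ n hl, card_pair hl n, Nat.card_eq_fintype_card, Fintype.card_fin]

open PowerSeries in
/-- The length-graded generating function `B_{d,ℓ}(z) = Σ_{n ≥ 1} b_{d,ℓ}(n) zⁿ` satisfies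
`B = z^ℓ + z^ℓ·B + d·z²·B + d·z²·B²`, equivalently
`d·z²·B² − (1 − z^ℓ − d·z²)·B + z^ℓ = 0`. -/
theorem B_functional_equation (d ℓ : ℕ) (hd : 1 ≤ d) (hl : 1 ≤ ℓ) :
    B d ℓ = (X : PowerSeries ℚ) ^ ℓ + X ^ ℓ * B d ℓ
        + (d : PowerSeries ℚ) * X ^ 2 * B d ℓ
        + (d : PowerSeries ℚ) * X ^ 2 * (B d ℓ) ^ 2 ∧
    (d : PowerSeries ℚ) * X ^ 2 * (B d ℓ) ^ 2
        - (1 - X ^ ℓ - (d : PowerSeries ℚ) * X ^ 2) * B d ℓ + X ^ ℓ = 0 := by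
  have hd2 : ((d : ℕ) : PowerSeries ℚ) = PowerSeries.C ((d : ℕ) : ℚ) :=
    (map_natCast (PowerSeries.C (R := ℚ)) d).symm
  have main : B d ℓ = (X : PowerSeries ℚ) ^ ℓ + X ^ ℓ * B d ℓ
      + (d : PowerSeries ℚ) * X ^ 2 * B d ℓ
      + (d : PowerSeries ℚ) * X ^ 2 * (B d ℓ) ^ 2 := by
    ext n
    have hrec := card_rec (d := d) hl n
    have cB : ∀ m, (coeff m) (B d ℓ) = (b d ℓ m : ℚ) := fun m => by
      simp [B, coeff_mk]
    have c1 : (coeff n) ((X : PowerSeries ℚ) ^ ℓ * B d ℓ)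
        = if ℓ ≤ n then (b d ℓ (n - ℓ) : ℚ) else 0 := by
      rw [mul_comm, coeff_mul_X_pow', cB]
    have c2 : (coeff n) ((X : PowerSeries ℚ) ^ 2 * B d ℓ)
        = if 2 ≤ n then (b d ℓ (n - 2) : ℚ) else 0 := by
      rw [mul_comm, coeff_mul_X_pow', cB]
    have c3 : (coeff n) ((X : PowerSeries ℚ) ^ 2 * (B d ℓ) ^ 2)
        = if 2 ≤ n then ∑ p ∈ Finset.HasAntidiagonal.antidiagonal (n - 2),
            (b d ℓ p.1 : ℚ) * (b d ℓ p.2 : ℚ) else 0 := by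
      rw [mul_comm, coeff_mul_X_pow']
      split
      · rw [sq, coeff_mul]
        exact Finset.sum_congr rfl fun p _ => by rw [cB, cB]
      · rfl
    rw [cB, map_add, map_add, map_add, hd2, mul_assoc, mul_assoc,
      coeff_C_mul, coeff_C_mul, c1, c2, c3, coeff_X_pow, hrec,
      show (if n = ℓ then (1:ℚ) else 0) = if ℓ = n then 1 else 0 by
        by_cases h : ℓ = n <;> simp [h, Ne.symm, eq_comm]]
    push_cast
    ring
  refine ⟨main, ?_⟩
  linear_combination -main

end MultiOp
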